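/- Let g = 2r with r ≥ 2, and let G_1 = π_g / N(ℬ^g_1). Then for every 1 ≤ k ≤ r the image of the word a_k a_{g+1−k} in G_1 is trivial (i.e., a_k = a_{g+1−k}^{-1} holds in G_1). -/
import Mathlib


namespace Paper

/-- The free group `F_g` on the `2g` generators `a_1, b_1, …, a_g, b_g`
(the pair `(i, false)` is `a_{i+1}`, the pair `(i, true)` is `b_{i+1}`). -/
abbrev F (g : ℕ) := FreeGroup (Fin g × Bool)

/-- The generator `a_i` of `F_g`, for `1 ≤ i ≤ g`; by convention `a_i = 1` for out-of-range
indices (in particular `a_{g+1} = 1`). -/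
def a (g i : ℕ) : F g :=
  if h : 1 ≤ i ∧ i ≤ g then FreeGroup.of (⟨i - 1, by omega⟩, false) else 1

/-- The generator `b_i` of `F_g`, for `1 ≤ i ≤ g`. -/
def b (g i : ℕ) : F g :=
  if h : 1 ≤ i ∧ i ≤ g then FreeGroup.of (⟨i - 1, by omega⟩, true) else 1

/-- The word `c_i = b_i⁻¹ ⋯ b_2⁻¹ b_1⁻¹ (a_1 b_1 a_1⁻¹)(a_2 b_2 a_2⁻¹) ⋯ (a_i b_i a_i⁻¹)`,
with `c_0 = 1`. -/
def c (g i : ℕ) : F g :=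
  (((List.range i).reverse.map fun j => (b g (j + 1))⁻¹).prod) *
    (((List.range i).map fun j => a g (j + 1) * b g (j + 1) * (a g (j + 1))⁻¹).prod)

/-- The product `b_i b_{i+1} ⋯ b_j`. -/
def prodb (g i j : ℕ) : F g := ((List.range (j + 1 - i)).map fun l => b g (i + l)).prod

/-- `B^h_{0,1} = b_1 b_2 ⋯ b_h`. -/
def B01 (g h : ℕ) : F g := prodb g 1 h

/-- `B^h_{0,2} = b_1 b_2 ⋯ b_h · c_h a_{h+1}`. -/
def B02 (g h : ℕ) : F g := prodb g 1 h * c g h * a g (h + 1)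

/-- `B^h_{0,s}` for `s = 1, 2`. -/
def B0 (g s h : ℕ) : F g := if s = 1 then B01 g h else B02 g h

/-- `B^h_{2k-1} = a_k · b_k b_{k+1} ⋯ b_{h+1-k} · c_{h+1-k} a_{h+1-k}`. -/
def Bodd (g h k : ℕ) : F g :=
  a g k * prodb g k (h + 1 - k) * c g (h + 1 - k) * a g (h + 1 - k)

/-- `B^h_{2k} = a_k · b_{k+1} b_{k+2} ⋯ b_{h-k} · c_{h-k} a_{h+1-k}`. -/
def Beven (g h k : ℕ) : F g :=
  a g k * prodb g (k + 1) (h - k) * c g (h - k) * a g (h + 1 - k)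

/-- The set of words `ℬ^h_s`: it consists of `B^h_{0,s}, B^h_1, …, B^h_h` (the odd-indexed
`B^h_{2k-1}` for `2k - 1 ≤ h` and the even-indexed `B^h_{2k}` for `2k ≤ h`), together with
`a_{r+1}` and `c_r a_{r+1}` when `h = 2r + 1` is odd. -/
def Bset (g s h : ℕ) : Set (F g) :=
  {B0 g s h}
    ∪ {w | ∃ k, 1 ≤ k ∧ 2 * k - 1 ≤ h ∧ w = Bodd g h k}
    ∪ {w | ∃ k, 1 ≤ k ∧ 2 * k ≤ h ∧ w = Beven g h k}
    ∪ (if h % 2 = 1 then {a g (h / 2 + 1), c g (h / 2) * a g (h / 2 + 1)} else (∅ : Set (F g)))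

/-- The genus-`g` surface group `π_g`, presented with generators `a_1, b_1, …, a_g, b_g`
and the single relator `c_g`. -/
abbrev pi (g : ℕ) := PresentedGroup ({c g g} : Set (F g))

/-- The natural projection `F_g → π_g`. -/
abbrev toPi (g : ℕ) : F g →* pi g := PresentedGroup.mk _

/-- The quotient of `π_g` by the normal closure of the images of a set `S` of words. -/
abbrev quotBy (g : ℕ) (S : Set (F g)) :=
  pi g ⧸ Subgroup.normalClosure (toPi g '' S)

/-- The projection `π_g → π_g / N(S)`. -/
abbrev projBy (g : ℕ) (S : Set (F g)) : pi g →* quotBy g S :=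
  QuotientGroup.mk' _

/-- For `g = 2r` with `r ≥ 2`, in `G_1 = π_g / N(ℬ^g_1)` the image of the
word `a_k a_{g+1-k}` is trivial for every `1 ≤ k ≤ r`. -/
theorem G1_ak_inverse (r g : ℕ) (hr : 2 ≤ r) (hg : g = 2 * r) :
    ∀ k, 1 ≤ k → k ≤ r →
      projBy g (Bset g 1 g) (toPi g (a g k * a g (g + 1 - k))) = 1 := by
  set S := Bset g 1 g with hS
  set φ : F g →* quotBy g S := (projBy g S).comp (toPi g) with hφ
  have hmem : ∀ w ∈ S, φ w = 1 := by
    intro w hw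
    exact (QuotientGroup.eq_one_iff _).mpr
      (Subgroup.subset_normalClosure ⟨w, hw, rfl⟩)
  have hcg : φ (c g g) = 1 := by
    have h1 : toPi g (c g g) = 1 :=
      (QuotientGroup.eq_one_iff _).mpr (Subgroup.subset_normalClosure rfl)
    simp [hφ, MonoidHom.comp_apply, h1]
  -- the key elements
  set Y : ℕ → quotBy g S := fun k => φ (prodb g k (g + 1 - k) * c g (g + 1 - k)) with hY
  -- relations
  have hodd : ∀ k, 1 ≤ k → k ≤ r →
      φ (a g k) * Y k * φ (a g (g + 1 - k)) = 1 := by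
    intro k hk1 hkr
    have hm : Bodd g g k ∈ S := by
      refine Or.inl (Or.inl (Or.inr ⟨k, hk1, by omega, rfl⟩))
    have := hmem _ hm
    rw [Bodd] at this
    simpa [hY, map_mul, mul_assoc] using this
  have heven : ∀ k, 1 ≤ k → k ≤ r →
      φ (a g k) * Y (k + 1) * φ (a g (g + 1 - k)) = 1 := by
    intro k hk1 hkr
    have hm : Beven g g k ∈ S := by
      refine Or.inl (Or.inr ⟨k, hk1, by omega, rfl⟩)
    have := hmem _ hm
    rw [Beven] at this
    have hidx : g + 1 - (k + 1) = g - k := by omega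
    simp only [hY, hidx, map_mul]
    simpa [map_mul, mul_assoc] using this
  have hstep : ∀ k, 1 ≤ k → k ≤ r → Y (k + 1) = Y k := by
    intro k hk1 hkr
    have h1 := hodd k hk1 hkr
    have h2 := heven k hk1 hkr
    have h3 : φ (a g k) * Y k * φ (a g (g + 1 - k))
        = φ (a g k) * Y (k + 1) * φ (a g (g + 1 - k)) := h1.trans h2.symm
    exact (mul_left_cancel (mul_right_cancel h3)).symm
  have hY1 : Y 1 = 1 := by
    have hm : B0 g 1 g ∈ S := Or.inl (Or.inl (Or.inl rfl))
    have h1 : φ (prodb g 1 g) = 1 := by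
      have := hmem _ hm
      simpa [B0, B01] using this
    have hidx : g + 1 - 1 = g := by omega
    simp [hY, hidx, map_mul, h1, hcg]
  have hYone : ∀ k, 1 ≤ k → k ≤ r → Y k = 1 := by
    intro k
    induction k with
    | zero => omega
    | succ n ih =>
      intro _ hnr
      rcases Nat.eq_zero_or_pos n with h0 | h0
      · subst h0; exact hY1
      · rw [hstep n h0 (by omega)]
        exact ih h0 (by omega)
  intro k hk1 hkr
  have h2 := heven k hk1 hkr
  have hY2 : Y (k + 1) = 1 := by
    rw [hstep k hk1 hkr]; exact hYone k hk1 hkr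
  rw [hY2, mul_one] at h2
  have : φ (a g k * a g (g + 1 - k)) = 1 := by
    rw [map_mul]; exact h2
  simpa [hφ, MonoidHom.comp_apply] using this
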